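/- Let R be a commutative ring and A a bialgebra over R. Then A admits an antipode (equivalently, A can be equipped with the structure of a Hopf algebra over R) if and only if the shear map sh_A : A ⊗[R] A → A ⊗[R] A, determined by sh_A(a ⊗ b) = Σ a₍₁₎ ⊗ a₍₂₎·b, is bijective. -/

import Mathlib

open TensorProduct

variable (R A : Type*) [CommRing R] [Ring A] [Bialgebra R A]

/-- The shear map of a bialgebra `A` over `R`: the `R`-linear endomorphism of `A ⊗[R] A`
determined by `a ⊗ b ↦ Σ a₍₁₎ ⊗ a₍₂₎·b`, i.e. the composite
`(id_A ⊗ mul) ∘ assoc ∘ (comul ⊗ id_A)`. -/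
noncomputable def shearMap : A ⊗[R] A →ₗ[R] A ⊗[R] A :=
  (LinearMap.mul' R A).lTensor A ∘ₗ (TensorProduct.assoc R A A A).toLinearMap ∘ₗ
    (Coalgebra.comul (R := R) (A := A)).rTensor A

namespace ShearMapAux
open Coalgebra LinearMap

noncomputable def mu : A ⊗[R] A →ₗ[R] A :=
  (TensorProduct.lid R A).toLinearMap ∘ₗ (counit : A →ₗ[R] R).rTensor A

noncomputable def rho : A ⊗[R] A →ₗ[R] A ⊗[R] (A ⊗[R] A) :=
  (TensorProduct.assoc R A A A).toLinearMap ∘ₗ (comul : A →ₗ[R] A ⊗[R] A).rTensor A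

noncomputable def F (f : A →ₗ[R] A) : A ⊗[R] A →ₗ[R] A ⊗[R] A :=
  ((LinearMap.mul' R A) ∘ₗ f.rTensor A).lTensor A ∘ₗ rho R A

noncomputable def ins : A →ₗ[R] A ⊗[R] A := (TensorProduct.mk R A A).flip 1

@[simp] lemma ins_apply (a : A) : ins R A a = a ⊗ₜ[R] 1 := rfl

@[simp] lemma mu_tmul (a b : A) : mu R A (a ⊗ₜ[R] b) = counit (R := R) a • b := by
  simp [mu]

lemma rho_tmul (a b : A) (repr : Repr R a (A × A)) :
    rho R A (a ⊗ₜ[R] b) = ∑ i ∈ repr.index, repr.left i ⊗ₜ[R] (repr.right i ⊗ₜ[R] b) := by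
  simp [rho, ← repr.eq, TensorProduct.sum_tmul, map_sum]

lemma F_tmul (f : A →ₗ[R] A) (a b : A) (repr : Repr R a (A × A)) :
    F R A f (a ⊗ₜ[R] b) = ∑ i ∈ repr.index, repr.left i ⊗ₜ[R] (f (repr.right i) * b) := by
  simp [F, rho_tmul R A a b repr, map_sum]

lemma sum_counit_smul (a : A) (repr : Repr R a (A × A)) :
    ∑ i ∈ repr.index, counit (R := R) (repr.left i) • repr.right i = a := by
  have h := sum_counit_tmul_eq (R := R) repr
  apply_fun (TensorProduct.lid R A) at h
  simpa only [map_sum, TensorProduct.lid_tmul, one_smul] using h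

lemma sum_smul_counit (a : A) (repr : Repr R a (A × A)) :
    ∑ i ∈ repr.index, counit (R := R) (repr.right i) • repr.left i = a := by
  have h := sum_tmul_counit_eq (R := R) repr
  apply_fun (TensorProduct.rid R A) at h
  simpa only [map_sum, TensorProduct.rid_tmul, one_smul] using h

/-- μ intertwines right multiplication. -/
lemma mu_lTensor_mulRight (b : A) :
    mu R A ∘ₗ (LinearMap.mulRight R b).lTensor A = LinearMap.mulRight R b ∘ₗ mu R A := by
  apply TensorProduct.ext'
  intro u v
  simp [smul_mul_assoc]

/-- counit law: (id ⊗ μ) ∘ ρ = id. -/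
lemma lTensor_mu_rho : (mu R A).lTensor A ∘ₗ rho R A = LinearMap.id := by
  apply TensorProduct.ext'
  intro a b
  rw [LinearMap.comp_apply, rho_tmul R A a b (ℛ R a)]
  simp only [map_sum, LinearMap.lTensor_tmul, mu_tmul, TensorProduct.tmul_smul,
    LinearMap.id_apply]
  simp only [TensorProduct.smul_tmul']
  rw [← TensorProduct.sum_tmul, sum_smul_counit]


/-- F f is right A-linear for right multiplication on the second factor. -/
lemma F_rightLinear (f : A →ₗ[R] A) (b : A) :
    F R A f ∘ₗ (LinearMap.mulRight R b).lTensor A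
      = (LinearMap.mulRight R b).lTensor A ∘ₗ F R A f := by
  apply TensorProduct.ext'
  intro a c
  simp only [LinearMap.comp_apply, LinearMap.lTensor_tmul, LinearMap.mulRight_apply,
    F_tmul R A f a _ (ℛ R a), map_sum, mul_assoc]

/-- F f is a morphism of left comodules. -/
lemma F_comodule (f : A →ₗ[R] A) :
    rho R A ∘ₗ F R A f = (F R A f).lTensor A ∘ₗ rho R A := by
  apply TensorProduct.ext'
  intro a b
  rw [LinearMap.comp_apply, LinearMap.comp_apply, F_tmul R A f a b (ℛ R a),
    rho_tmul R A a b (ℛ R a), map_sum, map_sum]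
  have h := (sum_map_tmul_tmul_eq (R := R) (LinearMap.id (R := R) (M := A)) LinearMap.id
    ((LinearMap.mulRight R b) ∘ₗ f) a (repr := ℛ R a)
    (a₁ := fun i => ℛ R ((ℛ R a).left i)) (a₂ := fun i => ℛ R ((ℛ R a).right i))).symm
  simp only [LinearMap.id_coe, id_eq, LinearMap.comp_apply, LinearMap.mulRight_apply] at h
  calc ∑ i ∈ (ℛ R a).index, rho R A ((ℛ R a).left i ⊗ₜ[R] (f ((ℛ R a).right i) * b))
      = ∑ i ∈ (ℛ R a).index, ∑ j ∈ (ℛ R ((ℛ R a).left i)).index,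
          (ℛ R ((ℛ R a).left i)).left j ⊗ₜ[R] ((ℛ R ((ℛ R a).left i)).right j
            ⊗ₜ[R] (f ((ℛ R a).right i) * b)) := by
        refine Finset.sum_congr rfl fun i _ => ?_
        exact rho_tmul R A _ _ (ℛ R ((ℛ R a).left i))
    _ = ∑ i ∈ (ℛ R a).index, ∑ j ∈ (ℛ R ((ℛ R a).right i)).index,
          (ℛ R a).left i ⊗ₜ[R] ((ℛ R ((ℛ R a).right i)).left j
            ⊗ₜ[R] (f ((ℛ R ((ℛ R a).right i)).right j) * b)) := h
    _ = ∑ i ∈ (ℛ R a).index, (F R A f).lTensor A ((ℛ R a).left i ⊗ₜ[R] ((ℛ R a).right i ⊗ₜ[R] b)) := by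
        refine Finset.sum_congr rfl fun i _ => ?_
        rw [LinearMap.lTensor_tmul, F_tmul R A f _ _ (ℛ R ((ℛ R a).right i)),
          TensorProduct.tmul_sum]


/-- μ ∘ F f = mul ∘ (f ⊗ id). -/
lemma mu_F (f : A →ₗ[R] A) :
    mu R A ∘ₗ F R A f = LinearMap.mul' R A ∘ₗ f.rTensor A := by
  apply TensorProduct.ext'
  intro a b
  rw [LinearMap.comp_apply, F_tmul R A f a b (ℛ R a)]
  simp only [map_sum, mu_tmul, LinearMap.comp_apply, LinearMap.rTensor_tmul,
    LinearMap.mul'_apply]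
  simp only [← smul_mul_assoc]
  rw [← Finset.sum_mul]
  congr 1
  calc ∑ i ∈ (ℛ R a).index, counit (R := R) ((ℛ R a).left i) • f ((ℛ R a).right i)
      = f (∑ i ∈ (ℛ R a).index, counit (R := R) ((ℛ R a).left i) • (ℛ R a).right i) := by
        simp [map_sum]
    _ = f a := by rw [sum_counit_smul]

/-- Extraction: recovering f from F f. -/
lemma mu_F_ins (f : A →ₗ[R] A) : mu R A ∘ₗ F R A f ∘ₗ ins R A = f := by
  ext a
  rw [LinearMap.comp_apply, LinearMap.comp_apply, ins_apply, ← LinearMap.comp_apply (mu R A),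
    mu_F]
  simp

/-- F g composed with insertion. -/
lemma F_ins (g : A →ₗ[R] A) :
    F R A g ∘ₗ ins R A = g.lTensor A ∘ₗ (comul : A →ₗ[R] A ⊗[R] A) := by
  ext a
  rw [LinearMap.comp_apply, ins_apply, F_tmul R A g a 1 (ℛ R a)]
  simp [← (ℛ R a).eq, map_sum]

/-- Reconstruction: a right-linear comodule endomorphism is F of its extraction. -/
lemma reconstruct (G : A ⊗[R] A →ₗ[R] A ⊗[R] A)
    (hr : ∀ b : A, G ∘ₗ (LinearMap.mulRight R b).lTensor A
        = (LinearMap.mulRight R b).lTensor A ∘ₗ G)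
    (hc : rho R A ∘ₗ G = G.lTensor A ∘ₗ rho R A) :
    G = F R A (mu R A ∘ₗ G ∘ₗ ins R A) := by
  have step1 : mu R A ∘ₗ G = LinearMap.mul' R A ∘ₗ (mu R A ∘ₗ G ∘ₗ ins R A).rTensor A := by
    apply TensorProduct.ext'
    intro a b
    have hab : a ⊗ₜ[R] b = (LinearMap.mulRight R b).lTensor A (a ⊗ₜ[R] 1) := by simp
    rw [LinearMap.comp_apply, hab, ← LinearMap.comp_apply G, hr b, LinearMap.comp_apply,
      ← LinearMap.comp_apply (mu R A), mu_lTensor_mulRight]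
    simp
  calc G = ((mu R A).lTensor A ∘ₗ rho R A) ∘ₗ G := by rw [lTensor_mu_rho]; rfl
    _ = (mu R A).lTensor A ∘ₗ G.lTensor A ∘ₗ rho R A := by
        rw [LinearMap.comp_assoc, hc]
    _ = (mu R A ∘ₗ G).lTensor A ∘ₗ rho R A := by
        rw [← LinearMap.comp_assoc, ← LinearMap.lTensor_comp]
    _ = F R A (mu R A ∘ₗ G ∘ₗ ins R A) := by rw [step1]; rfl


/-- Convolution product. -/
noncomputable def conv (f g : A →ₗ[R] A) : A →ₗ[R] A :=
  LinearMap.mul' R A ∘ₗ f.rTensor A ∘ₗ g.lTensor A ∘ₗ (comul : A →ₗ[R] A ⊗[R] A)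

/-- F is multiplicative for convolution. -/
lemma F_comp (f g : A →ₗ[R] A) : F R A f ∘ₗ F R A g = F R A (conv R A f g) := by
  have hr : ∀ b : A, (F R A f ∘ₗ F R A g) ∘ₗ (LinearMap.mulRight R b).lTensor A
      = (LinearMap.mulRight R b).lTensor A ∘ₗ (F R A f ∘ₗ F R A g) := by
    intro b
    rw [LinearMap.comp_assoc, F_rightLinear, ← LinearMap.comp_assoc, F_rightLinear,
      LinearMap.comp_assoc]
  have hc : rho R A ∘ₗ (F R A f ∘ₗ F R A g)
      = (F R A f ∘ₗ F R A g).lTensor A ∘ₗ rho R A := by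
    rw [← LinearMap.comp_assoc, F_comodule, LinearMap.comp_assoc, F_comodule,
      ← LinearMap.comp_assoc, ← LinearMap.lTensor_comp]
  rw [reconstruct R A _ hr hc]
  congr 1
  ext a
  have h1 := LinearMap.congr_fun (F_ins R A g) a
  have h2 := LinearMap.congr_fun (mu_F R A f) ((g.lTensor A) (comul a))
  simp only [LinearMap.comp_apply] at h1 h2 ⊢
  rw [h1, h2]
  rfl


/-- F of the convolution unit is the identity. -/
lemma F_one : F R A (Algebra.linearMap R A ∘ₗ (counit : A →ₗ[R] R)) = LinearMap.id := by
  have hr : ∀ b : A, (LinearMap.id : A ⊗[R] A →ₗ[R] A ⊗[R] A) ∘ₗ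
      (LinearMap.mulRight R b).lTensor A
      = (LinearMap.mulRight R b).lTensor A ∘ₗ LinearMap.id := by
    intro b; rw [LinearMap.id_comp, LinearMap.comp_id]
  have hc : rho R A ∘ₗ (LinearMap.id : A ⊗[R] A →ₗ[R] A ⊗[R] A)
      = (LinearMap.id : A ⊗[R] A →ₗ[R] A ⊗[R] A).lTensor A ∘ₗ rho R A := by
    rw [LinearMap.comp_id, LinearMap.lTensor_id, LinearMap.id_comp]
  have h := reconstruct R A LinearMap.id hr hc
  rw [h]
  congr 1
  ext a
  simp [Algebra.algebraMap_eq_smul_one]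


lemma shearMap_eq : shearMap R A = F R A LinearMap.id := by
  rw [shearMap, F, rho, LinearMap.rTensor_id, LinearMap.comp_id]

end ShearMapAux

open ShearMapAux Coalgebra in
/-- A bialgebra `A` over a commutative ring `R` admits an antipode (equivalently, can be
equipped with the structure of a Hopf algebra over `R`) if and only if its shear map
`a ⊗ b ↦ Σ a₍₁₎ ⊗ a₍₂₎·b` is bijective. -/
theorem exists_antipode_iff_bijective_shearMap :
    (∃ S : A →ₗ[R] A,
        LinearMap.mul' R A ∘ₗ S.rTensor A ∘ₗ Coalgebra.comul =
          Algebra.linearMap R A ∘ₗ Coalgebra.counit ∧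
        LinearMap.mul' R A ∘ₗ S.lTensor A ∘ₗ Coalgebra.comul =
          Algebra.linearMap R A ∘ₗ Coalgebra.counit) ↔
      Function.Bijective (shearMap R A) := by
  constructor
  · rintro ⟨S, h1, h2⟩
    have c1 : conv R A S LinearMap.id = Algebra.linearMap R A ∘ₗ counit := by
      rw [conv, LinearMap.lTensor_id, LinearMap.id_comp]; exact h1
    have c2 : conv R A LinearMap.id S = Algebra.linearMap R A ∘ₗ counit := by
      rw [conv, LinearMap.rTensor_id, LinearMap.id_comp]; exact h2
    have k1 : F R A S ∘ₗ shearMap R A = LinearMap.id := by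
      rw [shearMap_eq, F_comp, c1, F_one]
    have k2 : shearMap R A ∘ₗ F R A S = LinearMap.id := by
      rw [shearMap_eq, F_comp, c2, F_one]
    exact Function.bijective_iff_has_inverse.mpr
      ⟨F R A S, fun x => LinearMap.congr_fun k1 x, fun x => LinearMap.congr_fun k2 x⟩
  · intro h
    set T : A ⊗[R] A →ₗ[R] A ⊗[R] A :=
      (LinearEquiv.ofBijective (shearMap R A) h).symm.toLinearMap with hTdef
    have hTs : T ∘ₗ shearMap R A = LinearMap.id :=
      LinearMap.ext fun x => (LinearEquiv.ofBijective (shearMap R A) h).symm_apply_apply x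
    have hsT : shearMap R A ∘ₗ T = LinearMap.id :=
      LinearMap.ext fun x => (LinearEquiv.ofBijective (shearMap R A) h).apply_symm_apply x
    have shR : ∀ b : A, shearMap R A ∘ₗ (LinearMap.mulRight R b).lTensor A
        = (LinearMap.mulRight R b).lTensor A ∘ₗ shearMap R A := by
      intro b; rw [shearMap_eq]; exact F_rightLinear R A LinearMap.id b
    have shC : rho R A ∘ₗ shearMap R A = (shearMap R A).lTensor A ∘ₗ rho R A := by
      rw [shearMap_eq]; exact F_comodule R A LinearMap.id
    have hrT : ∀ b : A, T ∘ₗ (LinearMap.mulRight R b).lTensor A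
        = (LinearMap.mulRight R b).lTensor A ∘ₗ T := by
      intro b
      refine LinearMap.ext fun x => ?_
      simp only [LinearMap.comp_apply]
      have hx := LinearMap.congr_fun hsT x
      have hT' := LinearMap.congr_fun hTs ((LinearMap.mulRight R b).lTensor A (T x))
      have h2 := LinearMap.congr_fun (shR b) (T x)
      simp only [LinearMap.comp_apply, LinearMap.id_apply] at hx hT' h2
      calc T ((LinearMap.mulRight R b).lTensor A x)
          = T ((LinearMap.mulRight R b).lTensor A (shearMap R A (T x))) := by rw [hx]
        _ = T (shearMap R A ((LinearMap.mulRight R b).lTensor A (T x))) := by rw [← h2]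
        _ = (LinearMap.mulRight R b).lTensor A (T x) := hT'
    have key : (shearMap R A).lTensor A ∘ₗ (rho R A ∘ₗ T) = rho R A := by
      rw [← LinearMap.comp_assoc, ← shC, LinearMap.comp_assoc, hsT, LinearMap.comp_id]
    have hcT : rho R A ∘ₗ T = T.lTensor A ∘ₗ rho R A := by
      calc rho R A ∘ₗ T = LinearMap.id ∘ₗ (rho R A ∘ₗ T) := by rw [LinearMap.id_comp]
        _ = (T ∘ₗ shearMap R A).lTensor A ∘ₗ (rho R A ∘ₗ T) := by
            rw [hTs, LinearMap.lTensor_id]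
        _ = T.lTensor A ∘ₗ ((shearMap R A).lTensor A ∘ₗ (rho R A ∘ₗ T)) := by
            rw [LinearMap.lTensor_comp, LinearMap.comp_assoc]
        _ = T.lTensor A ∘ₗ rho R A := by rw [key]
    set f : A →ₗ[R] A := mu R A ∘ₗ T ∘ₗ ins R A with hfdef
    have hT : T = F R A f := reconstruct R A T hrT hcT
    have e1 : conv R A f LinearMap.id = Algebra.linearMap R A ∘ₗ counit := by
      have hFF : F R A (conv R A f LinearMap.id)
          = F R A (Algebra.linearMap R A ∘ₗ counit) := by
        rw [← F_comp, ← hT, ← shearMap_eq, F_one, hTs]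
      have := congrArg (fun G : A ⊗[R] A →ₗ[R] A ⊗[R] A => mu R A ∘ₗ G ∘ₗ ins R A) hFF
      simpa only [mu_F_ins] using this
    have e2 : conv R A LinearMap.id f = Algebra.linearMap R A ∘ₗ counit := by
      have hFF : F R A (conv R A LinearMap.id f)
          = F R A (Algebra.linearMap R A ∘ₗ counit) := by
        rw [← F_comp, ← hT, ← shearMap_eq, F_one, hsT]
      have := congrArg (fun G : A ⊗[R] A →ₗ[R] A ⊗[R] A => mu R A ∘ₗ G ∘ₗ ins R A) hFF
      simpa only [mu_F_ins] using this
    refine ⟨f, ?_, ?_⟩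
    · rw [conv, LinearMap.lTensor_id, LinearMap.id_comp] at e1; exact e1
    · rw [conv, LinearMap.rTensor_id, LinearMap.id_comp] at e2; exact e2
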